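/- Let n_c, n_o, m be positive integers, A : ℝ^{n_c} → ℝ^{n_c}, B : ℝ^{n_o} → ℝ^{n_c}, F : ℝ^{n_o} → ℝ^{n_o}, G : ℝᵐ → ℝ^{n_o} linear maps, and let V_o : ℝ^{n_o} → ℝ and V_c : ℝ^{n_c} → ℝ be nonnegative continuously differentiable functions. Suppose there are constants a_o, a_c, γ̄_c > 0 and γ̄_o ≥ 0 such that for all x, e, d: ⟨∇V_o(e), F e + G d⟩ ≤ −a_o·V_o(e) + γ̄_o·‖d‖² and ⟨∇V_c(x), A x + B e⟩ ≤ −a_c·V_c(x) + γ̄_c·V_o(e). Set ν̄ := γ̄_c/a_o and V(x,e) := 4·ν̄·V_o(e) + V_c(x). Then for all x, e, d: ⟨∇V(x,e), (A x + B e, F e + G d)⟩ ≤ −min{a_c, (3/4)·a_o}·V(x,e) + 4·ν̄·γ̄_o·‖d‖². -/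

import Mathlib

open scoped RealInnerProductSpace

theorem stmt_13 (nc no m : ℕ) (hnc : 0 < nc) (hno : 0 < no) (hm : 0 < m)
    (A : EuclideanSpace ℝ (Fin nc) →ₗ[ℝ] EuclideanSpace ℝ (Fin nc))
    (B : EuclideanSpace ℝ (Fin no) →ₗ[ℝ] EuclideanSpace ℝ (Fin nc))
    (F : EuclideanSpace ℝ (Fin no) →ₗ[ℝ] EuclideanSpace ℝ (Fin no))
    (G : EuclideanSpace ℝ (Fin m) →ₗ[ℝ] EuclideanSpace ℝ (Fin no))
    (V_o : EuclideanSpace ℝ (Fin no) → ℝ) (V_c : EuclideanSpace ℝ (Fin nc) → ℝ)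
    (hVo_nonneg : ∀ e, 0 ≤ V_o e) (hVc_nonneg : ∀ x, 0 ≤ V_c x)
    (hVo_smooth : ContDiff ℝ 1 V_o) (hVc_smooth : ContDiff ℝ 1 V_c)
    (a_o a_c γbar_c γbar_o : ℝ) (ha_o : 0 < a_o) (ha_c : 0 < a_c) (hγbar_c : 0 < γbar_c)
    (hγbar_o : 0 ≤ γbar_o)
    (hdiss_o : ∀ (e : EuclideanSpace ℝ (Fin no)) (d : EuclideanSpace ℝ (Fin m)),
      ⟪gradient V_o e, F e + G d⟫ ≤ -a_o * V_o e + γbar_o * ‖d‖ ^ 2)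
    (hdiss_c : ∀ (x : EuclideanSpace ℝ (Fin nc)) (e : EuclideanSpace ℝ (Fin no)),
      ⟪gradient V_c x, A x + B e⟫ ≤ -a_c * V_c x + γbar_c * V_o e)
    (νbar : ℝ) (hνbar : νbar = γbar_c / a_o)
    -- `V (x, e) = 4·ν̄·V_o e + V_c x`; its derivative along the cascade dynamics
    -- `(A x + B e, F e + G d)` is the sum of the two partial-gradient pairings below.
    (V : EuclideanSpace ℝ (Fin nc) → EuclideanSpace ℝ (Fin no) → ℝ)
    (hV : ∀ x e, V x e = 4 * νbar * V_o e + V_c x) :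
    ∀ (x : EuclideanSpace ℝ (Fin nc)) (e : EuclideanSpace ℝ (Fin no))
      (d : EuclideanSpace ℝ (Fin m)),
      ⟪gradient (fun x' => V x' e) x, A x + B e⟫ + ⟪gradient (fun e' => V x e') e, F e + G d⟫ ≤
        -(min a_c (3 / 4 * a_o)) * V x e + 4 * νbar * γbar_o * ‖d‖ ^ 2 := by
  intro x e d
  have hVc_diff : DifferentiableAt ℝ V_c x := (hVc_smooth.differentiable one_ne_zero) x
  have hVo_diff : DifferentiableAt ℝ V_o e := (hVo_smooth.differentiable one_ne_zero) e
  -- gradient in x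
  have hgx : gradient (fun x' => V x' e) x = gradient V_c x := by
    have h1 : HasGradientAt V_c (gradient V_c x) x := hVc_diff.hasGradientAt
    have h2 : HasGradientAt (fun x' => V x' e) (gradient V_c x) x := by
      have := (h1.hasFDerivAt.const_add (4 * νbar * V_o e))
      have h3 : HasFDerivAt (fun x' => V x' e)
          ((InnerProductSpace.toDual ℝ _) (gradient V_c x)) x := by
        simpa [hV] using this
      exact (hasGradientAt_iff_hasFDerivAt).2 h3
    exact h2.gradient
  -- gradient in e
  have hge : gradient (fun e' => V x e') e = (4 * νbar) • gradient V_o e := by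
    have h1 : HasGradientAt V_o (gradient V_o e) e := hVo_diff.hasGradientAt
    have h2 : HasGradientAt (fun e' => V x e') ((4 * νbar) • gradient V_o e) e := by
      have hf : HasFDerivAt (fun e' => 4 * νbar * V_o e' + V_c x)
          ((4 * νbar) • (InnerProductSpace.toDual ℝ _) (gradient V_o e)) e := by
        simpa [smul_eq_mul] using (h1.hasFDerivAt.const_mul (4 * νbar)).add_const (V_c x)
      have h3 : HasFDerivAt (fun e' => V x e')
          ((InnerProductSpace.toDual ℝ _) ((4 * νbar) • gradient V_o e)) e := by
        simpa [hV, map_smul] using hf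
      exact (hasGradientAt_iff_hasFDerivAt).2 h3
    exact h2.gradient
  rw [hgx, hge, real_inner_smul_left, hV]
  have h1 := hdiss_c x e
  have h2 := hdiss_o e d
  have hν : νbar * a_o = γbar_c := by
    rw [hνbar]; field_simp
  have hνpos : 0 < νbar := by rw [hνbar]; positivity
  have hmin1 : min a_c (3 / 4 * a_o) ≤ a_c := min_le_left _ _
  have hmin2 : min a_c (3 / 4 * a_o) ≤ 3 / 4 * a_o := min_le_right _ _
  have hVo := hVo_nonneg e
  have hVc := hVc_nonneg x
  nlinarith [mul_le_mul_of_nonneg_left h2 (by positivity : (0:ℝ) ≤ 4 * νbar),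
    mul_le_mul_of_nonneg_left hmin1 hVc, mul_le_mul_of_nonneg_left hmin2 (by positivity : (0:ℝ) ≤ 4 * νbar * V_o e)]
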